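/- If (Y, b) is an Eilenberg–Moore algebra for a powerset-enriched monad T on Set, then for any maps f, g : X → Y with f ≤ g pointwise (in the order on Y induced by the algebra structure), one has b ∘ Tf ≤ b ∘ Tg pointwise. -/
import Mathlib


universe u

/-- A powerset-enriched monad on `Set`: a monad `(T, η, μ)` together with a monad
morphism `τ` from the powerset monad. -/
structure PSEM : Type (u + 1) where
  T : Type u → Type u
  map : ∀ {X Y : Type u}, (X → Y) → T X → T Y
  η : ∀ {X : Type u}, X → T X
  μ : ∀ {X : Type u}, T (T X) → T X
  τ : ∀ {X : Type u}, Set X → T X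
  map_id : ∀ {X : Type u} (t : T X), map id t = t
  map_comp : ∀ {X Y Z : Type u} (f : X → Y) (g : Y → Z) (t : T X),
    map (g ∘ f) t = map g (map f t)
  η_nat : ∀ {X Y : Type u} (f : X → Y) (x : X), map f (η x) = η (f x)
  μ_nat : ∀ {X Y : Type u} (f : X → Y) (t : T (T X)),
    map f (μ t) = μ (map (map f) t)
  unit_left : ∀ {X : Type u} (t : T X), μ (η t) = t
  unit_right : ∀ {X : Type u} (t : T X), μ (map η t) = t
  assoc : ∀ {X : Type u} (t : T (T (T X))), μ (μ t) = μ (map μ t)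
  τ_nat : ∀ {X Y : Type u} (f : X → Y) (A : Set X), map f (τ A) = τ (f '' A)
  τ_η : ∀ {X : Type u} (x : X), τ ({x} : Set X) = η x
  τ_μ : ∀ {X : Type u} (𝒮 : Set (Set X)), τ (⋃₀ 𝒮) = μ (map τ (τ 𝒮))

namespace PSEM

variable (M : PSEM.{u})

/-- The supremum map `μ_X ∘ τ_{TX} : P(TX) → TX` on `T X`. -/
def ksup {X : Type u} (S : Set (M.T X)) : M.T X := M.μ (M.τ S)

/-- The order induced on `T X` by the sup-semilattice structure `μ_X ∘ τ_{TX}`. -/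
def kle {X : Type u} (t t' : M.T X) : Prop := M.ksup {t, t'} = t'

/-- The order induced on a `T`-algebra `(V, q)` by the sup-semilattice structure
`q ∘ τ_V`. -/
def algLe {V : Type u} (q : M.T V → V) (v w : V) : Prop := q (M.τ {v, w}) = w

/-- Infima in a `T`-algebra `(V, q)`, computed as the supremum of the lower bounds. -/
def algInf {V : Type u} (q : M.T V → V) (S : Set V) : V :=
  q (M.τ {v | ∀ w ∈ S, M.algLe q v w})

end PSEM

/-- For a powerset-enriched monad `T` and a `T`-algebra `(Y, b)`, if `f ≤ g`
pointwise (in the order on `Y` induced by the algebra structure) then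
`b ∘ Tf ≤ b ∘ Tg` pointwise. -/
theorem algebra_structure_monotone (M : PSEM.{u})
    (enr : ∀ {X Y : Type u} (f g : X → M.T Y),
      (∀ x, M.kle (f x) (g x)) →
      ∀ t : M.T X, M.kle (M.μ (M.map f t)) (M.μ (M.map g t)))
    {X Y : Type u} (b : M.T Y → Y)
    (hb1 : ∀ y : Y, b (M.η y) = y)
    (hb2 : ∀ t : M.T (M.T Y), b (M.μ t) = b (M.map b t))
    (f g : X → Y)
    (hfg : ∀ x : X, M.algLe b (f x) (g x)) :
    ∀ t : M.T X, M.algLe b (b (M.map f t)) (b (M.map g t)) := by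
  intro t
  -- key: kle (η (f x)) (τ {f x, g x})
  have key : ∀ x : X, M.kle (M.η (f x)) (M.τ ({f x, g x} : Set Y)) := by
    intro x
    unfold PSEM.kle PSEM.ksup
    have h1 : ({M.η (f x), M.τ ({f x, g x} : Set Y)} : Set (M.T Y))
        = M.τ '' ({{f x}, {f x, g x}} : Set (Set Y)) := by
      rw [Set.image_insert_eq, Set.image_singleton, M.τ_η]
    have h2 : (⋃₀ ({{f x}, {f x, g x}} : Set (Set Y))) = ({f x, g x} : Set Y) := by
      ext y; simp [Set.mem_insert_iff]; tauto
    rw [h1, ← M.τ_nat, ← M.τ_μ, h2]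
  have henr := enr (fun x => M.η (f x)) (fun x => M.τ ({f x, g x} : Set Y)) key t
  unfold PSEM.kle PSEM.ksup at henr
  -- kle s s' implies algLe b (b s) (b s')
  have hLe : ∀ s s' : M.T Y, M.μ (M.τ {s, s'}) = s' → M.algLe b (b s) (b s') := by
    intro s s' h
    unfold PSEM.algLe
    have := congrArg b h
    rwa [hb2, M.τ_nat, Set.image_insert_eq, Set.image_singleton] at this
  have hfin := hLe _ _ henr
  have e1 : M.μ (M.map (fun x => M.η (f x)) t) = M.map f t := by
    have : M.map (fun x => M.η (f x)) t = M.map M.η (M.map f t) := by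
      rw [← M.map_comp]; rfl
    rw [this, M.unit_right]
  have e2 : b (M.μ (M.map (fun x => M.τ ({f x, g x} : Set Y)) t)) = b (M.map g t) := by
    rw [hb2, ← M.map_comp]
    congr 1
    have : (b ∘ fun x => M.τ ({f x, g x} : Set Y)) = g := by
      funext x; exact hfg x
    rw [this]
  rw [e1, e2] at hfin
  exact hfin
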